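/- Let k ≥ 5 be an integer and let a_0, a_1, ..., a_c be positive integers with c ≥ k - 3, each a_i ≤ 3, and a_0 + a_1 + ... + a_c = k. Then (k - a_0)(k - a_1)···(k - a_c)·k^{k-c} > 3k · (1 + 3/k) · (2/(100k)) · k^{k+1}. -/

import Mathlib

/-- Shift-counting inequality: for an integer `k ≥ 5` and positive integers
`a_0, ..., a_c` with `c ≥ k-3`, each `a_i ≤ 3` and `a_0 + ... + a_c = k`:
`(k-a_0)···(k-a_c)·k^{k-c} > 3k·(1+3/k)·(2/(100k))·k^{k+1}`. -/
theorem stmt16 (k c : ℕ) (hk : 5 ≤ k) (hc : k - 3 ≤ c)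
    (a : Fin (c + 1) → ℕ) (ha1 : ∀ i, 1 ≤ a i) (ha3 : ∀ i, a i ≤ 3)
    (hsum : ∑ i, a i = k) :
    (∏ i, ((k : ℝ) - (a i : ℝ))) * (k : ℝ) ^ (k - c) >
      3 * (k : ℝ) * (1 + 3 / (k : ℝ)) * (2 / (100 * (k : ℝ))) * (k : ℝ) ^ (k + 1) := by
  have hk5 : (5:ℝ) ≤ (k:ℝ) := by exact_mod_cast hk
  set K : ℝ := (k:ℝ) with hKdef
  have hK0 : (0:ℝ) < K := by linarith
  have hK1 : (0:ℝ) < K - 1 := by linarith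
  have hK2 : (0:ℝ) < K - 2 := by linarith
  -- c + 1 ≤ k
  have hck : c + 1 ≤ k := by
    calc c + 1 = ∑ _i : Fin (c+1), 1 := by simp
    _ ≤ ∑ i, a i := Finset.sum_le_sum (fun i _ => ha1 i)
    _ = k := hsum
  set s : ℕ := k - (c+1) with hs
  have hsk : s + (c+1) = k := Nat.sub_add_cancel hck
  have hs2 : s ≤ 2 := by omega
  have hkc : k - c = s + 1 := by omega
  -- sum of (a i - 1) equals s
  have hsum' : ∑ i, (a i - 1) = s := by
    have h1 : ∑ i, (a i - 1 + 1) = ∑ i, a i :=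
      Finset.sum_congr rfl (fun i _ => by have := ha1 i; omega)
    rw [Finset.sum_add_distrib] at h1
    simp only [Finset.sum_const, Finset.card_univ, Fintype.card_fin, smul_eq_mul, mul_one] at h1
    omega
  -- pointwise bound
  have hpoint : ∀ i, (K-1) * ((K-2)/K)^(a i - 1) ≤ K - (a i : ℝ) := by
    intro i
    have h1 := ha1 i; have h3 := ha3 i
    have : a i = 1 ∨ a i = 2 ∨ a i = 3 := by omega
    rcases this with h | h | h <;> rw [h] <;> push_cast <;> norm_num
    · rw [show (K-1)*((K-2)/K) = (K-1)*(K-2)/K from by ring, div_le_iff₀ hK0]; nlinarith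
    · rw [div_pow, show (K-1)*((K-2)^2/K^2) = (K-1)*(K-2)^2/K^2 from by ring,
        div_le_iff₀ (by positivity)]; nlinarith
  -- product bound
  have hprod : (K-1)^(c+1) * ((K-2)/K)^s ≤ ∏ i, (K - (a i:ℝ)) := by
    calc (K-1)^(c+1) * ((K-2)/K)^s
        = ∏ i : Fin (c+1), ((K-1) * ((K-2)/K)^(a i - 1)) := by
          rw [Finset.prod_mul_distrib, Finset.prod_const, Finset.prod_pow_eq_pow_sum, hsum']
          simp
      _ ≤ ∏ i, (K - (a i:ℝ)) :=
          Finset.prod_le_prod (fun i _ => by positivity) (fun i _ => hpoint i)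
  -- exponential bound : K^(k-2) ≤ e * (K-1)^(k-2)
  have hE : Real.exp 1 < 2.7182818286 := Real.exp_one_lt_d9
  have hcast2 : ((k-2 : ℕ) : ℝ) = K - 2 := by
    push_cast [Nat.cast_sub (by omega : 2 ≤ k)]; ring
  have hpow : K^(k-2) ≤ Real.exp 1 * (K-1)^(k-2) := by
    have h1 : K ≤ Real.exp (1/(K-1)) * (K-1) := by
      have hb := Real.add_one_le_exp (1/(K-1))
      have : (1/(K-1) + 1) * (K-1) ≤ Real.exp (1/(K-1)) * (K-1) :=
        mul_le_mul_of_nonneg_right hb (le_of_lt hK1)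
      calc K = (1/(K-1) + 1) * (K-1) := by field_simp; ring
        _ ≤ _ := this
    have h2 : K^(k-2) ≤ (Real.exp (1/(K-1)))^(k-2) * (K-1)^(k-2) := by
      rw [← mul_pow]; exact pow_le_pow_left₀ (le_of_lt hK0) h1 _
    have h3 : (Real.exp (1/(K-1)))^(k-2) = Real.exp (((k-2:ℕ):ℝ) * (1/(K-1))) := by
      rw [Real.exp_nat_mul]
    have h4 : Real.exp (((k-2:ℕ):ℝ) * (1/(K-1))) ≤ Real.exp 1 := by
      apply Real.exp_le_exp.mpr
      rw [mul_one_div, div_le_one hK1, hcast2]; linarith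
    calc K^(k-2) ≤ (Real.exp (1/(K-1)))^(k-2) * (K-1)^(k-2) := h2
      _ = Real.exp (((k-2:ℕ):ℝ) * (1/(K-1))) * (K-1)^(k-2) := by rw [h3]
      _ ≤ Real.exp 1 * (K-1)^(k-2) :=
          mul_le_mul_of_nonneg_right h4 (by positivity)
  -- key numeric inequality
  have hA : (0:ℝ) < (K-1)^(k-2) := by positivity
  have hnum : 3*(K+3)*K*Real.exp 1 < 50*(K-2)^2 := by
    have hpos : (0:ℝ) < 3*(K+3)*K := by nlinarith
    have := mul_lt_mul_of_pos_left hE hpos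
    nlinarith [sq_nonneg (K-5), hk5]
  have hfinal : 3*(K+3)*K*K^(k-2) < 50*(K-2)^2*(K-1)^(k-2) := by
    calc 3*(K+3)*K*K^(k-2) ≤ 3*(K+3)*K*(Real.exp 1 * (K-1)^(k-2)) :=
          mul_le_mul_of_nonneg_left hpow (by nlinarith)
      _ = (3*(K+3)*K*Real.exp 1) * (K-1)^(k-2) := by ring
      _ < (50*(K-2)^2) * (K-1)^(k-2) := mul_lt_mul_of_pos_right hnum hA
  -- assemble
  have hRHS : 3 * K * (1 + 3 / K) * (2 / (100 * K)) * K ^ (k + 1)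
      = (3/50)*(K+3)*K^(k-2)*K^2 := by
    have hKk : K^(k+1) = K^(k-2)*K^2*K := by
      rw [← pow_add, ← pow_succ]
      congr 1
      omega
    rw [hKk]
    field_simp
    ring
  rw [hRHS]
  -- lower bound for LHS
  have hL1 : (K-1)^(c+1)*(K-2)^s*K ≤ (∏ i, (K - (a i:ℝ))) * K^(k-c) := by
    have hKs : ((K-2)/K)^s * K^(k-c) = (K-2)^s * K := by
      rw [hkc, div_pow, pow_succ]
      field_simp
    calc (K-1)^(c+1)*(K-2)^s*K = (K-1)^(c+1) * ((K-2)/K)^s * K^(k-c) := by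
          rw [mul_assoc, ← hKs]; ring
      _ ≤ (∏ i, (K - (a i:ℝ))) * K^(k-c) :=
          mul_le_mul_of_nonneg_right hprod (by positivity)
  have hL2 : (K-1)^(k-2)*(K-2)^2*K ≤ (K-1)^(c+1)*(K-2)^s*K := by
    have hc1 : c + 1 = (k-2) + (2-s) := by omega
    have h2s : 2 = (2-s) + s := by omega
    have hmono : (K-2)^(2-s) ≤ (K-1)^(2-s) :=
      pow_le_pow_left₀ (by linarith) (by linarith) _
    calc (K-1)^(k-2)*(K-2)^2*K
        = (K-1)^(k-2)*((K-2)^(2-s)*(K-2)^s)*K := by rw [← pow_add, ← h2s]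
      _ ≤ (K-1)^(k-2)*((K-1)^(2-s)*(K-2)^s)*K := by
          apply mul_le_mul_of_nonneg_right _ (le_of_lt hK0)
          apply mul_le_mul_of_nonneg_left _ (by positivity)
          exact mul_le_mul_of_nonneg_right hmono (by positivity)
      _ = (K-1)^(c+1)*(K-2)^s*K := by
          rw [hc1, pow_add]; ring
  have hRlt : (3/50)*(K+3)*K^(k-2)*K^2 < (K-1)^(k-2)*(K-2)^2*K := by
    have h := mul_lt_mul_of_pos_right hfinal hK0
    calc (3/50)*(K+3)*K^(k-2)*K^2 = (3*(K+3)*K*K^(k-2)*K)/50 := by ring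
      _ < (50*(K-2)^2*(K-1)^(k-2)*K)/50 := by linarith
      _ = (K-1)^(k-2)*(K-2)^2*K := by ring
  calc (3/50)*(K+3)*K^(k-2)*K^2 < (K-1)^(k-2)*(K-2)^2*K := hRlt
    _ ≤ (K-1)^(c+1)*(K-2)^s*K := hL2
    _ ≤ (∏ i, (K - (a i:ℝ))) * K^(k-c) := hL1
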